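/- Let 0 ≤ a₁ < a₂ ≤ π, τ > 0, and let b : [0,τ] → ℝ be continuous. Let (c_n)_{n ≥ 1} be a square-summable sequence of real numbers. Suppose that for all 0 ≤ s < t ≤ τ and all ξ ∈ (a₁, a₂), Σ_{n ≥ 1} exp(−n²(t−s) + ∫ₛᵗ b(r)dr) · c_n · sin(nξ) = 0 (the series converges absolutely since t − s > 0). Then c_n = 0 for every n ≥ 1. -/

import Mathlib

open scoped Topology ENNReal NNReal

private lemma sq_pnat_inj : Function.Injective (fun n : ℕ+ => ((n : ℕ)) ^ 2) := by
  intro m n h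
  exact PNat.coe_injective (Nat.pow_left_injective (by norm_num) h)

lemma aux_heat (τ : ℝ) (hτ : 0 < τ) (d : ℕ+ → ℝ) (C : ℝ) (hC : ∀ n, |d n| ≤ C)
    (hv : ∀ h : ℝ, 0 < h → h ≤ τ →
      ∑' n : ℕ+, Real.exp (-(n : ℝ) ^ 2 * h) * d n = 0) :
    ∀ n, d n = 0 := by
  classical
  have hC0 : 0 ≤ C := (abs_nonneg _).trans (hC 1)
  set a : ℕ → ℝ := fun k => if hk : ∃ n : ℕ+, (n : ℕ) ^ 2 = k then d hk.choose else 0 with ha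
  have ha_sq : ∀ n : ℕ+, a ((n : ℕ) ^ 2) = d n := by
    intro n
    have hk : ∃ m : ℕ+, (m : ℕ) ^ 2 = (n : ℕ) ^ 2 := ⟨n, rfl⟩
    have hmn : hk.choose = n := sq_pnat_inj hk.choose_spec
    simp only [ha, dif_pos hk, hmn]
  have ha_bd : ∀ k, |a k| ≤ C := by
    intro k
    by_cases hk : ∃ n : ℕ+, (n : ℕ) ^ 2 = k
    · simp only [ha, dif_pos hk]; exact hC _
    · simp only [ha, dif_neg hk, abs_zero]; exact hC0
  set p : FormalMultilinearSeries ℝ ℝ ℝ :=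
    fun k => ContinuousMultilinearMap.mkPiRing ℝ (Fin k) (a k) with hp
  have hpn : ∀ k, ‖p k‖ = |a k| := by
    intro k
    rw [hp]
    rw [ContinuousMultilinearMap.norm_mkPiRing, Real.norm_eq_abs]
  have hrad : (1 : ℝ≥0∞) ≤ p.radius := by
    have := p.le_radius_of_bound C (r := 1) (fun k => by
      simp only [hpn, NNReal.coe_one, one_pow, mul_one]; exact ha_bd k)
    simpa using this
  have hpos : (0 : ℝ≥0∞) < p.radius := lt_of_lt_of_le zero_lt_one hrad
  have hball := p.hasFPowerSeriesOnBall hpos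
  have hioo : Set.Ioo (-1 : ℝ) 1 ⊆ Metric.eball (0 : ℝ) p.radius := by
    intro u hu
    refine EMetric.ball_subset_ball hrad ?_
    rw [show ((1 : ℝ≥0∞)) = ((1 : ℝ≥0) : ℝ≥0∞) from rfl, Metric.emetric_ball_nnreal]
    simp only [Metric.mem_ball, Real.dist_eq, sub_zero, NNReal.coe_one]
    rw [abs_lt]; exact hu
  have hana : AnalyticOnNhd ℝ p.sum (Set.Ioo (-1 : ℝ) 1) := by
    intro u hu
    exact hball.analyticAt_of_mem (by simpa using hioo hu)
  have hsum : ∀ u : ℝ, p.sum u = ∑' n : ℕ+, d n * u ^ ((n : ℕ) ^ 2) := by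
    intro u
    have h1 : p.sum u = ∑' k : ℕ, a k * u ^ k := by
      refine tsum_congr fun k => ?_
      rw [hp]
      simp [ContinuousMultilinearMap.mkPiRing_apply, smul_eq_mul, mul_comm]
    rw [h1]
    have hsupp : Function.support (fun k : ℕ => a k * u ^ k) ⊆
        Set.range (fun n : ℕ+ => ((n : ℕ)) ^ 2) := by
      intro k hk
      by_contra hkr
      have : a k = 0 := by
        rw [ha]
        refine dif_neg ?_
        rintro ⟨m, hm⟩
        exact hkr ⟨m, hm⟩
      exact hk (by simp [this])
    have := sq_pnat_inj.tsum_eq (f := fun k : ℕ => a k * u ^ k) hsupp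
    rw [← this]
    refine tsum_congr fun n => ?_
    show a ((n : ℕ) ^ 2) * u ^ ((n : ℕ) ^ 2) = d n * u ^ ((n : ℕ) ^ 2)
    rw [ha_sq]
  have he0 : (0 : ℝ) < Real.exp (-τ) := Real.exp_pos _
  have he1 : Real.exp (-τ) < 1 := by
    rw [Real.exp_lt_one_iff]; linarith
  have hvan : ∀ u ∈ Set.Ioo (Real.exp (-τ)) 1, p.sum u = 0 := by
    intro u hu
    have hu0 : 0 < u := he0.trans hu.1
    have hh0 : 0 < -Real.log u := by
      have : Real.log u < 0 := Real.log_neg hu0 hu.2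
      linarith
    have hhτ : -Real.log u ≤ τ := by
      have : -τ ≤ Real.log u := (Real.le_log_iff_exp_le hu0).mpr hu.1.le
      linarith
    have hexp : Real.exp (-(-Real.log u)) = u := by rw [neg_neg, Real.exp_log hu0]
    rw [hsum u, ← hv (-Real.log u) hh0 hhτ]
    refine tsum_congr fun n => ?_
    have hpow : u ^ ((n : ℕ) ^ 2) = Real.exp (-(n : ℝ) ^ 2 * (-Real.log u)) := by
      conv_lhs => rw [← hexp]
      rw [← Real.exp_nat_mul]
      congr 1
      push_cast
      ring
    rw [hpow]
    ring
  have hzero : Set.EqOn p.sum 0 (Set.Ioo (-1 : ℝ) 1) := by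
    set u₀ : ℝ := (Real.exp (-τ) + 1) / 2 with hu₀def
    have hu₀ : u₀ ∈ Set.Ioo (-1 : ℝ) 1 := ⟨by rw [hu₀def]; linarith, by rw [hu₀def]; linarith⟩
    have hmem : Set.Ioo (Real.exp (-τ)) 1 ∈ 𝓝 u₀ :=
      Ioo_mem_nhds (by rw [hu₀def]; linarith) (by rw [hu₀def]; linarith)
    have hev : ∀ᶠ z in 𝓝 u₀, p.sum z = 0 := Filter.eventually_of_mem hmem hvan
    have hfreq : ∃ᶠ z in 𝓝[≠] u₀, p.sum z = 0 :=
      (hev.filter_mono nhdsWithin_le_nhds).frequently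
    exact hana.eqOn_zero_of_preconnected_of_frequently_eq_zero isPreconnected_Ioo hu₀ hfreq
  have hev0 : p.sum =ᶠ[𝓝 (0 : ℝ)] 0 := by
    have hmem : Set.Ioo (-1 : ℝ) 1 ∈ 𝓝 (0 : ℝ) := Ioo_mem_nhds (by norm_num) (by norm_num)
    exact Filter.eventually_of_mem hmem hzero
  have hp0 : p = 0 := hball.hasFPowerSeriesAt.eq_zero_of_eventually hev0
  intro n
  have h1 : p ((n : ℕ) ^ 2) = 0 := by rw [hp0]; rfl
  have h2 : a ((n : ℕ) ^ 2) = 0 := by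
    have := congrArg (fun q : ContinuousMultilinearMap ℝ
      (fun _ : Fin ((n : ℕ) ^ 2) => ℝ) ℝ => q (fun _ => (1 : ℝ))) h1
    simpa [hp, ContinuousMultilinearMap.mkPiRing_apply] using this
  rw [← ha_sq n, h2]
theorem stmt_14
    (a₁ a₂ : ℝ) (ha₁ : 0 ≤ a₁) (ha : a₁ < a₂) (ha₂ : a₂ ≤ Real.pi)
    (τ : ℝ) (hτ : 0 < τ)
    (b : ℝ → ℝ) (hb : ContinuousOn b (Set.Icc 0 τ))
    (c : ℕ+ → ℝ) (hc : Summable fun n : ℕ+ => (c n) ^ 2)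
    (hvanish : ∀ s t : ℝ, 0 ≤ s → s < t → t ≤ τ → ∀ ξ ∈ Set.Ioo a₁ a₂,
      ∑' n : ℕ+, Real.exp (-(n : ℝ) ^ 2 * (t - s) + ∫ r in s..t, b r) * c n *
        Real.sin ((n : ℝ) * ξ) = 0) :
    ∀ n : ℕ+, c n = 0 := by
  intro n
  obtain ⟨ξ, hξ, hsin⟩ : ∃ ξ ∈ Set.Ioo a₁ a₂, Real.sin ((n : ℝ) * ξ) ≠ 0 := by
    by_contra hcon
    push_neg at hcon
    have hsub : Set.Ioo a₁ a₂ ⊆ Set.range (fun k : ℤ => (k : ℝ) * Real.pi / (n : ℝ)) := by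
      intro ξ hξ
      obtain ⟨k, hk⟩ := Real.sin_eq_zero_iff.mp (hcon ξ hξ)
      refine ⟨k, ?_⟩
      have hn0 : (n : ℝ) ≠ 0 := by positivity
      field_simp
      linarith [hk]
    have hcnt : (Set.Ioo a₁ a₂).Countable := (Set.countable_range _).mono hsub
    have h1 := hcnt.measure_zero MeasureTheory.volume
    rw [Real.volume_Ioo] at h1
    rw [ENNReal.ofReal_eq_zero] at h1
    linarith
  set d : ℕ+ → ℝ := fun m => c m * Real.sin ((m : ℝ) * ξ) with hd
  have hCb : ∀ m, |d m| ≤ Real.sqrt (∑' k : ℕ+, (c k) ^ 2) := by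
    intro m
    have h1 : |c m| ≤ Real.sqrt (∑' k : ℕ+, (c k) ^ 2) := by
      rw [← Real.sqrt_sq_eq_abs]
      exact Real.sqrt_le_sqrt (Summable.le_tsum hc m fun _ _ => sq_nonneg _)
    calc |d m| = |c m| * |Real.sin ((m : ℝ) * ξ)| := abs_mul _ _
      _ ≤ |c m| * 1 := by
          gcongr
          exact Real.abs_sin_le_one _
      _ = |c m| := mul_one _
      _ ≤ _ := h1
  have hv : ∀ h : ℝ, 0 < h → h ≤ τ →
      ∑' m : ℕ+, Real.exp (-(m : ℝ) ^ 2 * h) * d m = 0 := by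
    intro h hh0 hhτ
    have hvv := hvanish 0 h le_rfl hh0 hhτ ξ hξ
    have hterm : ∀ m : ℕ+,
        Real.exp (-(m : ℝ) ^ 2 * (h - 0) + ∫ r in (0:ℝ)..h, b r) * c m *
          Real.sin ((m : ℝ) * ξ)
        = Real.exp (∫ r in (0:ℝ)..h, b r) * (Real.exp (-(m : ℝ) ^ 2 * h) * d m) := by
      intro m
      rw [Real.exp_add, sub_zero, hd]
      ring
    rw [tsum_congr hterm, tsum_mul_left] at hvv
    rcases mul_eq_zero.mp hvv with h' | h'
    · exact absurd h' (Real.exp_ne_zero _)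
    · exact h'
  have hdz := aux_heat τ hτ d _ hCb hv n
  rcases mul_eq_zero.mp hdz with h' | h'
  · exact h'
  · exact absurd h' hsin
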